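/- Let H be a commutative multiplicative hyperring of characteristic 2. If H is regular and every hyperideal of H is a C-hyperideal, then every nonzero proper strong C-hyperideal of H is an sdf-absorbing hyperideal of H. -/
import Mathlib


open Pointwise

/-- A commutative multiplicative hyperring structure on an abelian group `H`. -/
structure MulHyperring (H : Type*) [AddCommGroup H] where
  hmul : H → H → Set H
  hmul_nonempty : ∀ x y : H, (hmul x y).Nonempty
  hmul_comm : ∀ x y : H, hmul x y = hmul y x
  hmul_assoc : ∀ x y z : H, (⋃ a ∈ hmul y z, hmul x a) = ⋃ b ∈ hmul x y, hmul b z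
  hmul_distrib : ∀ x y z : H, hmul x (y + z) ⊆ hmul x y + hmul x z
  hmul_neg : ∀ x y : H, hmul x (-y) = -(hmul x y)

namespace Hyper

variable {H : Type*} [AddCommGroup H] (mul : H → H → Set H)

/-- `P` is a hyperideal. -/
def IsIdeal (P : Set H) : Prop :=
  (0 : H) ∈ P ∧ (∀ x ∈ P, ∀ y ∈ P, x - y ∈ P) ∧ ∀ r : H, ∀ x ∈ P, mul r x ⊆ P

/-- Hyperproduct `a ∘ b₁ ∘ ⋯ ∘ bₙ`. -/
def hprod : H → List H → Set H
  | a, [] => {a}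
  | a, b :: l => ⋃ t ∈ mul a b, hprod t l

/-- `C` is a finite hyperproduct `c₁ ∘ ⋯ ∘ cₙ`. -/
def IsProduct (C : Set H) : Prop := ∃ (a : H) (l : List H), C = hprod mul a l

/-- `D` is a finite (nonempty) sum of finite hyperproducts. -/
def IsSum (D : Set H) : Prop :=
  ∃ L : List (Set H), L ≠ [] ∧ (∀ C ∈ L, IsProduct mul C) ∧ D = L.sum

/-- `P` is a `𝒞`-hyperideal. -/
def IsCIdeal (P : Set H) : Prop :=
  IsIdeal mul P ∧ ∀ C : Set H, IsProduct mul C → (C ∩ P).Nonempty → C ⊆ P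

/-- `P` is a strong `𝒞`-hyperideal. -/
def IsStrongCIdeal (P : Set H) : Prop :=
  IsIdeal mul P ∧ ∀ D : Set H, IsSum mul D → (D ∩ P).Nonempty → D ⊆ P

/-- The hypersquare `x² = x ∘ x`. -/
def sq (x : H) : Set H := mul x x

/-- `P` is an sdf-absorbing hyperideal. -/
def IsSdf (P : Set H) : Prop :=
  IsIdeal mul P ∧ P ≠ Set.univ ∧
    ∀ x y : H, x ≠ 0 → y ≠ 0 → sq mul x - sq mul y ⊆ P → x - y ∈ P ∨ x + y ∈ P

/-- `P` is a weakly sdf-absorbing hyperideal. -/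
def IsWeaklySdf (P : Set H) : Prop :=
  IsIdeal mul P ∧ P ≠ Set.univ ∧
    ∀ x y : H, x ≠ 0 → y ≠ 0 → (0 : H) ∉ sq mul x - sq mul y →
      sq mul x - sq mul y ⊆ P → x - y ∈ P ∨ x + y ∈ P

/-- `P` is a prime hyperideal. -/
def IsPrime (P : Set H) : Prop :=
  IsIdeal mul P ∧ P ≠ Set.univ ∧ ∀ x y : H, mul x y ⊆ P → x ∈ P ∨ y ∈ P

/-- The radical: intersection of the prime hyperideals containing `P`. -/
def rad (P : Set H) : Set H := ⋂₀ {Q : Set H | IsPrime mul Q ∧ P ⊆ Q}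

/-- `hpow mul x n` is the hyperpower `x^(n+1)`. -/
def hpow (x : H) (n : ℕ) : Set H := hprod mul x (List.replicate n x)

/-- `x` is nilpotent: `0 ∈ xⁿ` for some `n`. -/
def IsNilpotent (x : H) : Prop := ∃ n : ℕ, (0 : H) ∈ hpow mul x n

/-- `x` is a regular element: `x ∈ x² ∘ y` for some `y`. -/
def IsRegularElem (x : H) : Prop := ∃ y : H, x ∈ ⋃ t ∈ sq mul x, mul t y

/-- The hyperideal generated by a set `S`. -/
def span (S : Set H) : Set H := ⋂₀ {Q : Set H | IsIdeal mul Q ∧ S ⊆ Q}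

/-- `P` is a maximal hyperideal. -/
def IsMaximal (P : Set H) : Prop :=
  IsIdeal mul P ∧ P ≠ Set.univ ∧
    ∀ B : Set H, IsIdeal mul B → P ⊆ B → B = P ∨ B = Set.univ

end Hyper

/-- Componentwise hypermultiplication on a product. -/
def prodMul {H₁ H₂ : Type*} (m₁ : H₁ → H₁ → Set H₁) (m₂ : H₂ → H₂ → Set H₂) :
    H₁ × H₂ → H₁ × H₂ → Set (H₁ × H₂) :=
  fun a b => (m₁ a.1 b.1) ×ˢ (m₂ a.2 b.2)

/-- in characteristic 2, if `H` is regular and every hyperideal is a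
`𝒞`-hyperideal, then every nonzero proper strong `𝒞`-hyperideal is sdf-absorbing. -/
theorem stmt5 {H : Type*} [AddCommGroup H] (M : MulHyperring H)
    (hchar : ∀ x : H, x + x = 0)
    (hreg : ∀ x : H, Hyper.IsRegularElem M.hmul x)
    (hall : ∀ P : Set H, Hyper.IsIdeal M.hmul P → Hyper.IsCIdeal M.hmul P) :
    ∀ P : Set H, Hyper.IsStrongCIdeal M.hmul P → P ≠ ({0} : Set H) → P ≠ Set.univ →
      Hyper.IsSdf M.hmul P := by
  intro P hP _ hPu
  refine ⟨hP.1, hPu, fun x y hx hy hsub => ?_⟩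
  -- in char 2, x - y = x + y, so it suffices to show x + y ∈ P
  have hprod_pair : ∀ a b : H, Hyper.IsProduct M.hmul (M.hmul a b) := by
    intro a b
    refine ⟨a, [b], ?_⟩
    simp [Hyper.hprod, Set.biUnion_of_singleton]
  set L : List (Set H) := [M.hmul x x, M.hmul x y, M.hmul x y, M.hmul y y] with hL
  have hIsSum : Hyper.IsSum M.hmul L.sum := by
    refine ⟨L, by simp [hL], ?_, rfl⟩
    intro C hC
    simp only [hL, List.mem_cons, List.not_mem_nil, or_false] at hC
    rcases hC with rfl | rfl | rfl | rfl <;> exact hprod_pair _ _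
  obtain ⟨a, ha⟩ := M.hmul_nonempty x x
  obtain ⟨b, hb⟩ := M.hmul_nonempty y y
  obtain ⟨c, hc⟩ := M.hmul_nonempty x y
  have hLsum : L.sum = M.hmul x x + (M.hmul x y + (M.hmul x y + M.hmul y y)) := by
    simp [hL, add_assoc]
  have hmemL : a + (c + (c + b)) ∈ L.sum := by
    rw [hLsum]
    exact Set.add_mem_add ha (Set.add_mem_add hc (Set.add_mem_add hc hb))
  have hab : a + (c + (c + b)) = a - b := by
    have hcc : c + c = 0 := hchar c
    have hbb : -b = b := neg_eq_of_add_eq_zero_left (hchar b)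
    have h1 : a + (c + (c + b)) = a + b + (c + c) := by abel
    rw [h1, hcc, add_zero, sub_eq_add_neg, hbb]
  have habP : a - b ∈ P := hsub (Set.sub_mem_sub ha hb)
  have hLP : L.sum ⊆ P := hP.2 _ hIsSum ⟨a + (c + (c + b)), hmemL, hab ▸ habP⟩
  -- (x+y)² ⊆ L.sum
  have hsq : M.hmul (x + y) (x + y) ⊆ L.sum := by
    intro t ht
    have h1 := M.hmul_distrib (x + y) x y ht
    rw [M.hmul_comm (x+y) x, M.hmul_comm (x+y) y] at h1
    obtain ⟨u, hu, v, hv, rfl⟩ := h1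
    have h2 := M.hmul_distrib x x y hu
    have h3 := M.hmul_distrib y x y hv
    rw [M.hmul_comm y x] at h3
    obtain ⟨u1, hu1, u2, hu2, rfl⟩ := h2
    obtain ⟨v1, hv1, v2, hv2, rfl⟩ := h3
    rw [hLsum]
    show u1 + u2 + (v1 + v2) ∈ _
    have h4 : u1 + u2 + (v1 + v2) = u1 + (u2 + (v1 + v2)) := by abel
    rw [h4]
    exact Set.add_mem_add hu1 (Set.add_mem_add hu2 (Set.add_mem_add hv1 hv2))
  -- regularity
  obtain ⟨z, hz⟩ := hreg (x + y)
  simp only [Set.mem_iUnion] at hz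
  obtain ⟨t, ht, hxyz⟩ := hz
  have htP : t ∈ P := hLP (hsq ht)
  have : x + y ∈ P := by
    have := hP.1.2.2 z t htP
    rw [M.hmul_comm z t] at this
    exact this hxyz
  right
  exact this
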